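/- Let n ≥ 1, let 0 < L < H, and let α ≤ (2H−L)/H with α ≥ 1. Then the following system of 2^n strict linear inequalities in the variables x_i(b_{−i}) ∈ ℝ (for i ∈ [n], b_{−i} ∈ {L,H}^{n−1}) has no solution: for every bid vector b ∈ {L,H}^n, −(H−L)·∑_{i: b_i = H} x_i(b_{−i}) + L·∑_{i: b_i = L} x_i(b_{−i}) > −(n_H(b)·(α−1)/α)·H + (n_L(b)/α)·L, where n_H(b) and n_L(b) count the entries of b equal to H and L respectively. -/

import Mathlib

open Finset

/-- count of `true` entries. -/
private def cnt {n : ℕ} (b : Fin n → Bool) : ℕ :=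
  (Finset.univ.filter (fun i => b i = true)).card

private lemma cnt_update {n : ℕ} (b : Fin n → Bool) (i : Fin n) (hbi : b i = true) :
    cnt b = cnt (Function.update b i false) + 1 := by
  have h : Finset.univ.filter (fun j => b j = true)
      = insert i (Finset.univ.filter (fun j => Function.update b i false j = true)) := by
    ext j
    by_cases hj : j = i <;> simp [Function.update_apply, hj, hbi]
  unfold cnt
  rw [h, Finset.card_insert_of_notMem (by simp [Function.update_apply])]

private lemma key (n : ℕ) (L H : ℝ) (hL : 0 < L) (hLH : L < H)
    (x : Fin n → (Fin n → Bool) → ℝ)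
    (hx : ∀ i b b', (∀ j, j ≠ i → b j = b' j) → x i b = x i b') :
    ∑ b : Fin n → Bool,
      (L/(H-L))^(cnt b) *
        (-(H - L) * (∑ i ∈ Finset.univ.filter (fun i => b i = true), x i b)
          + L * (∑ i ∈ Finset.univ.filter (fun i => b i = false), x i b)) = 0 := by
  have hHL : (0:ℝ) < H - L := by linarith
  have step1 : ∀ b : Fin n → Bool,
      -(H - L) * (∑ i ∈ Finset.univ.filter (fun i => b i = true), x i b)
        + L * (∑ i ∈ Finset.univ.filter (fun i => b i = false), x i b)
      = ∑ i : Fin n, (if b i = true then -(H-L) else L) * x i b := by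
    intro b
    rw [← Finset.sum_filter_add_sum_filter_not Finset.univ (fun i => b i = true)]
    rw [Finset.mul_sum, Finset.mul_sum]
    congr 1
    · exact Finset.sum_congr rfl fun i hi => by
        simp only [Finset.mem_filter] at hi; rw [if_pos hi.2]
    · rw [show (Finset.univ.filter (fun i => b i = false))
          = (Finset.univ.filter (fun i => ¬ b i = true)) by
        apply Finset.filter_congr; intro i _; simp]
      exact Finset.sum_congr rfl fun i hi => by
        simp only [Finset.mem_filter] at hi; rw [if_neg hi.2]
  simp_rw [step1, Finset.mul_sum]
  rw [Finset.sum_comm]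
  apply Finset.sum_eq_zero
  intro i _
  rw [← Finset.sum_filter_add_sum_filter_not Finset.univ (fun b => b i = true)]
  have hbij : ∑ b ∈ Finset.univ.filter (fun b : Fin n → Bool => b i = true),
        (L/(H-L))^(cnt b) * ((if b i = true then -(H-L) else L) * x i b)
      = ∑ b ∈ Finset.univ.filter (fun b : Fin n → Bool => ¬ b i = true),
        -((L/(H-L))^(cnt b) * ((if b i = true then -(H-L) else L) * x i b)) := by
    apply Finset.sum_nbij' (fun b => Function.update b i false)
      (fun b => Function.update b i true)
    · intro b hb; simp
    · intro b hb; simp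
    · intro b hb
      simp only [Finset.mem_filter] at hb
      rw [Function.update_idem, ← hb.2, Function.update_eq_self]
    · intro b hb
      simp only [Finset.mem_filter, Bool.not_eq_true] at hb
      rw [Function.update_idem, ← hb.2, Function.update_eq_self]
    · intro b hb
      simp only [Finset.mem_filter] at hb
      have hxeq : x i b = x i (Function.update b i false) :=
        hx i b _ (fun j hj => (Function.update_of_ne hj false b).symm)
      rw [if_pos hb.2, if_neg (by simp), cnt_update b i hb.2, ← hxeq, pow_succ]
      field_simp
  rw [hbij, ← Finset.sum_add_distrib]
  simp

theorem stmt_7 (n : ℕ) (hn : 1 ≤ n) (L H α : ℝ) (hL : 0 < L) (hLH : L < H)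
    (hα1 : 1 ≤ α) (hα : α ≤ (2 * H - L) / H) :
    ¬ ∃ x : Fin n → (Fin n → Bool) → ℝ,
      (∀ i b b', (∀ j, j ≠ i → b j = b' j) → x i b = x i b') ∧
      ∀ b : Fin n → Bool,
        -(H - L) * (∑ i ∈ Finset.univ.filter (fun i => b i = true), x i b)
          + L * (∑ i ∈ Finset.univ.filter (fun i => b i = false), x i b)
        > -(((Finset.univ.filter (fun i => b i = true)).card : ℝ) * (α - 1) / α) * H
          + (((Finset.univ.filter (fun i => b i = false)).card : ℝ) / α) * L := by
  rintro ⟨x, hx, hineq⟩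
  have hH : (0:ℝ) < H := lt_trans hL hLH
  have hα0 : (0:ℝ) < α := lt_of_lt_of_le one_pos hα1
  have h2 : α * H ≤ 2 * H - L := by
    have := mul_le_mul_of_nonneg_right hα (le_of_lt hH)
    rwa [div_mul_cancel₀ _ (ne_of_gt hH)] at this
  have hαH : (α - 1) * H ≤ H - L := by nlinarith
  have hr : (0:ℝ) < L/(H-L) := div_pos hL (by linarith)
  have key1 := key n L H hL hLH x hx
  have key2 := key n L H hL hLH (fun _ _ => 1) (fun _ _ _ _ => rfl)
  simp only [Finset.sum_const, nsmul_eq_mul, mul_one] at key2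
  have hsum : (0:ℝ) >
      ∑ b : Fin n → Bool, (L/(H-L))^(cnt b) *
        (-(((Finset.univ.filter (fun i => b i = true)).card : ℝ) * (α - 1) / α) * H
          + (((Finset.univ.filter (fun i => b i = false)).card : ℝ) / α) * L) := by
    rw [← key1]
    apply Finset.sum_lt_sum_of_nonempty Finset.univ_nonempty
    intro b _
    exact mul_lt_mul_of_pos_left (hineq b) (pow_pos hr _)
  have hlower : ∀ b : Fin n → Bool,
      (1/α) * ((L/(H-L))^(cnt b) *
        (-(H - L) * ((Finset.univ.filter (fun i => b i = true)).card : ℝ)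
          + L * ((Finset.univ.filter (fun i => b i = false)).card : ℝ)))
      ≤ (L/(H-L))^(cnt b) *
        (-(((Finset.univ.filter (fun i => b i = true)).card : ℝ) * (α - 1) / α) * H
          + (((Finset.univ.filter (fun i => b i = false)).card : ℝ) / α) * L) := by
    intro b
    set A : ℝ := ((Finset.univ.filter (fun i => b i = true)).card : ℝ) with hA
    set B : ℝ := ((Finset.univ.filter (fun i => b i = false)).card : ℝ) with hB
    have hA0 : 0 ≤ A := Nat.cast_nonneg _
    have hK : (0:ℝ) ≤ (L/(H-L))^(cnt b) := le_of_lt (pow_pos hr _)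
    have e1 : (-(A * (α - 1) / α) * H + B / α * L)
        = (1/α) * (-(A * (α - 1)) * H + B * L) := by ring
    rw [e1, show (1/α) * ((L/(H-L))^(cnt b) * (-(H - L) * A + L * B))
        = (L/(H-L))^(cnt b) * ((1/α) * (-(H - L) * A + L * B)) by ring]
    apply mul_le_mul_of_nonneg_left _ hK
    apply mul_le_mul_of_nonneg_left _ (by positivity : (0:ℝ) ≤ 1/α)
    nlinarith [mul_le_mul_of_nonneg_left hαH hA0]
  have hge : ∑ b : Fin n → Bool, (L/(H-L))^(cnt b) *
        (-(((Finset.univ.filter (fun i => b i = true)).card : ℝ) * (α - 1) / α) * H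
          + (((Finset.univ.filter (fun i => b i = false)).card : ℝ) / α) * L)
      ≥ ∑ b : Fin n → Bool, (1/α) * ((L/(H-L))^(cnt b) *
        (-(H - L) * ((Finset.univ.filter (fun i => b i = true)).card : ℝ)
          + L * ((Finset.univ.filter (fun i => b i = false)).card : ℝ))) :=
    Finset.sum_le_sum fun b _ => hlower b
  rw [← Finset.mul_sum, key2, mul_zero] at hge
  linarith
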